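/- Let α_1,…,α_n ∈ F_q be distinct with n = 2k, h(z) = Π(z - α_i), and suppose there exist λ ∈ F_q^*, u(z) ∈ F_q[z] nonzero with deg u ≤ n-2, and s(z) ∈ F_q[z] with s(α_i) ≠ 0 for all i, such that λ s(z)^2 = u(z)h(z) + h'(z) and 2·deg s ≥ 2k + deg u. Then, with v_i = s(α_i)^{-1}, the code GRS_k(α, v) is self-dual, i.e., GRS_k(α, v) = GRS_k(α, v)^⊥. -/

import Mathlib

open Polynomial Finset

/-- The Euclidean dual code of a linear code `C ⊆ F^n`. -/
def dualCode {F : Type*} [Field F] {n : ℕ} (C : Submodule F (Fin n → F)) :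
    Submodule F (Fin n → F) where
  carrier := {x | ∀ y ∈ C, ∑ i, x i * y i = 0}
  add_mem' := by
    intro a b ha hb y hy
    simp only [Set.mem_setOf_eq, Pi.add_apply, add_mul] at *
    rw [Finset.sum_add_distrib, ha y hy, hb y hy, add_zero]
  zero_mem' := by intro y hy; simp
  smul_mem' := by
    intro c a ha y hy
    simp only [Set.mem_setOf_eq, Pi.smul_apply, smul_eq_mul, mul_assoc] at *
    rw [← Finset.mul_sum, ha y hy, mul_zero]

/-- The generalized Reed–Solomon code `GRS_k(α, v)`. -/
def GRSCode {F : Type*} [Field F] {n : ℕ} (k : ℕ) (α v : Fin n → F) :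
    Submodule F (Fin n → F) where
  carrier := {c | ∃ f : Polynomial F, f.degree < k ∧ c = fun i => v i * f.eval (α i)}
  add_mem' := by
    rintro a b ⟨f, hf, rfl⟩ ⟨g, hg, rfl⟩
    exact ⟨f + g, lt_of_le_of_lt (Polynomial.degree_add_le f g) (max_lt hf hg),
      by funext i; simp [mul_add]⟩
  zero_mem' := ⟨0, by rw [Polynomial.degree_zero]; exact bot_lt_iff_ne_bot.mpr (by simp), by funext i; simp⟩
  smul_mem' := by
    rintro c a ⟨f, hf, rfl⟩
    exact ⟨c • f, lt_of_le_of_lt (Polynomial.degree_smul_le c f) hf,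
      by funext i; simp [Polynomial.eval_smul]; ring⟩


lemma aux_coeff_basis {F : Type*} [Field F] {n : ℕ} (hn : 1 ≤ n) (α : Fin n → F) (i : Fin n) :
    (Lagrange.basis Finset.univ α i).coeff (n - 1) = Lagrange.nodalWeight Finset.univ α i := by
  have hb : Lagrange.basis Finset.univ α i
      = Polynomial.C (Lagrange.nodalWeight Finset.univ α i)
        * Lagrange.nodal ((Finset.univ : Finset (Fin n)).erase i) α := by
    rw [Lagrange.basis_eq_prod_sub_inv_mul_nodal_div (Finset.mem_univ i),
      ← Lagrange.nodal_erase_eq_nodal_div (Finset.mem_univ i)]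
  have hcard : ((Finset.univ : Finset (Fin n)).erase i).card = n - 1 := by
    rw [Finset.card_erase_of_mem (Finset.mem_univ i), Finset.card_fin]
  have hnd : (Lagrange.nodal ((Finset.univ : Finset (Fin n)).erase i) α).natDegree = n - 1 := by
    rw [Lagrange.natDegree_nodal, hcard]
  rw [hb, Polynomial.coeff_C_mul, ← hnd, Polynomial.Monic.coeff_natDegree Lagrange.nodal_monic,
    mul_one]

lemma aux_coeff_interpolate {F : Type*} [Field F] {n : ℕ} (hn : 1 ≤ n) (α r : Fin n → F) :
    (Lagrange.interpolate Finset.univ α r).coeff (n - 1)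
      = ∑ i, r i * Lagrange.nodalWeight Finset.univ α i := by
  rw [Lagrange.interpolate_apply, Polynomial.finset_sum_coeff]
  refine Finset.sum_congr rfl fun i _ => ?_
  rw [Polynomial.coeff_C_mul, aux_coeff_basis hn α i]

lemma aux_coeff_eq_sum {F : Type*} [Field F] {n : ℕ} (hn : 1 ≤ n) (α : Fin n → F)
    (hα : Function.Injective α) (P : Polynomial F) (hP : P.degree < (n : WithBot ℕ)) :
    P.coeff (n - 1) = ∑ i, P.eval (α i) * Lagrange.nodalWeight Finset.univ α i := by
  have hinj : Set.InjOn α (Finset.univ : Finset (Fin n)) := fun a _ b _ h => hα h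
  have h1 : P = Lagrange.interpolate Finset.univ α fun i => P.eval (α i) :=
    Lagrange.eq_interpolate hinj (by rwa [Finset.card_fin])
  conv_lhs => rw [h1]
  rw [aux_coeff_interpolate hn α _]


theorem GRSCode_selfDual {F : Type*} [Field F] {n : ℕ}
    (α : Fin n → F) (hα : Function.Injective α)
    (h : Polynomial F) (hh : h = ∏ i, (Polynomial.X - Polynomial.C (α i)))
    (k : ℕ) (hk : 1 ≤ k) (hn2k : n = 2 * k)
    (lam : F) (hlam : lam ≠ 0)
    (u : Polynomial F) (hu0 : u ≠ 0) (hudeg : u.degree ≤ ((n - 2 : ℕ) : WithBot ℕ))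
    (s : Polynomial F) (hs : ∀ i, s.eval (α i) ≠ 0)
    (heq : Polynomial.C lam * s ^ 2 = u * h + Polynomial.derivative h)
    (hsdeg : 2 * k + u.natDegree ≤ 2 * s.natDegree)
    (v : Fin n → F) (hv : ∀ i, v i = (s.eval (α i))⁻¹) :
    GRSCode k α v = dualCode (GRSCode k α v) := by
  have hn1 : 1 ≤ n := by omega
  have hinj : Set.InjOn α (Finset.univ : Finset (Fin n)) := fun a _ b _ hab => hα hab
  have hnodal : h = Lagrange.nodal Finset.univ α := by rw [hh, Lagrange.nodal_eq]
  -- derivative of h at nodes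
  have hder : ∀ i, (Polynomial.derivative h).eval (α i) = lam * (s.eval (α i)) ^ 2 := by
    intro i
    have h0 : h.eval (α i) = 0 := by
      rw [hh, Polynomial.eval_prod]
      exact Finset.prod_eq_zero (Finset.mem_univ i) (by simp)
    have := congrArg (Polynomial.eval (α i)) heq
    simp only [Polynomial.eval_mul, Polynomial.eval_add, Polynomial.eval_C, Polynomial.eval_pow,
      h0, mul_zero, zero_add] at this
    exact this.symm
  have hW : ∀ i, Lagrange.nodalWeight Finset.univ α i = (lam * (s.eval (α i)) ^ 2)⁻¹ := by
    intro i
    rw [Lagrange.nodalWeight_eq_eval_derivative_nodal (Finset.mem_univ i), ← hnodal, hder i]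
  have hvv : ∀ i, v i * v i = lam * Lagrange.nodalWeight Finset.univ α i := by
    intro i
    rw [hv, hW, sq, mul_inv, mul_inv, ← mul_assoc, mul_inv_cancel₀ hlam, one_mul]
  -- key summation identity
  have keysum : ∀ f g : Polynomial F, (f * g).degree < (n : WithBot ℕ) →
      ∑ i, (v i * f.eval (α i)) * (v i * g.eval (α i)) = lam * (f * g).coeff (n - 1) := by
    intro f g hfg
    rw [aux_coeff_eq_sum hn1 α hα _ hfg, Finset.mul_sum]
    refine Finset.sum_congr rfl fun i _ => ?_
    rw [Polynomial.eval_mul]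
    have := hvv i
    calc (v i * f.eval (α i)) * (v i * g.eval (α i))
        = (v i * v i) * (f.eval (α i) * g.eval (α i)) := by ring
      _ = lam * (f.eval (α i) * g.eval (α i) * Lagrange.nodalWeight Finset.univ α i) := by
          rw [this]; ring
  ext x
  constructor
  · rintro ⟨f, hf, rfl⟩
    intro y hy
    obtain ⟨g, hg, rfl⟩ := hy
    by_cases hf0 : f = 0
    · simp [hf0]
    by_cases hg0 : g = 0
    · simp [hg0]
    have hdf : f.natDegree < k := (Polynomial.natDegree_lt_iff_degree_lt hf0).mpr hf
    have hdg : g.natDegree < k := (Polynomial.natDegree_lt_iff_degree_lt hg0).mpr hg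
    have hfg0 : f * g ≠ 0 := mul_ne_zero hf0 hg0
    have hnd : (f * g).natDegree < n - 1 := by
      rw [Polynomial.natDegree_mul hf0 hg0]; omega
    have hdeg : (f * g).degree < (n : WithBot ℕ) := by
      rw [← Polynomial.natDegree_lt_iff_degree_lt hfg0]; omega
    have := keysum f g hdeg
    rw [Polynomial.coeff_eq_zero_of_natDegree_lt hnd, mul_zero] at this
    exact this
  · intro hx
    set g := Lagrange.interpolate Finset.univ α (fun i => x i * s.eval (α i)) with hgdef
    have hgev : ∀ i, g.eval (α i) = x i * s.eval (α i) := fun i =>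
      Lagrange.eval_interpolate_at_node _ hinj (Finset.mem_univ i)
    have hgdeg : g.degree < (n : WithBot ℕ) := by
      have := Lagrange.degree_interpolate_lt (fun i => x i * s.eval (α i)) hinj
      rwa [Finset.card_fin] at this
    have hxg : ∀ i, x i = v i * g.eval (α i) := by
      intro i
      rw [hgev, hv]
      field_simp
      rw [mul_div_assoc, div_self (hs i), mul_one]
    refine ⟨g, ?_, funext hxg⟩
    by_contra hcon
    have hcon' : (k : WithBot ℕ) ≤ g.degree := not_lt.mp hcon
    have hg0 : g ≠ 0 := by
      intro h0
      rw [h0, Polynomial.degree_zero] at hcon'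
      simp at hcon'
    have hkd : k ≤ g.natDegree := by
      rw [Polynomial.degree_eq_natDegree hg0] at hcon'
      exact_mod_cast hcon'
    have hdn : g.natDegree < n := (Polynomial.natDegree_lt_iff_degree_lt hg0).mpr hgdeg
    set m : ℕ := n - 1 - g.natDegree with hmdef
    have hmem : (fun i => v i * (Polynomial.X ^ m : Polynomial F).eval (α i)) ∈ GRSCode k α v := by
      refine ⟨Polynomial.X ^ m, ?_, rfl⟩
      rw [Polynomial.degree_X_pow]
      exact_mod_cast show m < k by omega
    have hzero := hx _ hmem
    have hdeg2 : (g * Polynomial.X ^ m).degree < (n : WithBot ℕ) := by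
      rw [← Polynomial.natDegree_lt_iff_degree_lt (mul_ne_zero hg0 (pow_ne_zero m Polynomial.X_ne_zero)),
        Polynomial.natDegree_mul hg0 (pow_ne_zero m Polynomial.X_ne_zero), Polynomial.natDegree_X_pow]
      omega
    have hks := keysum g (Polynomial.X ^ m) hdeg2
    have hsum : ∑ i, x i * (v i * (Polynomial.X ^ m : Polynomial F).eval (α i))
        = ∑ i, (v i * g.eval (α i)) * (v i * (Polynomial.X ^ m : Polynomial F).eval (α i)) :=
      Finset.sum_congr rfl fun i _ => by rw [← hxg i]
    rw [hsum, hks] at hzero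
    have hco : (g * Polynomial.X ^ m).coeff (n - 1) = g.leadingCoeff := by
      rw [show n - 1 = g.natDegree + m by omega, Polynomial.coeff_mul_X_pow]
      rfl
    rw [hco] at hzero
    exact Polynomial.leadingCoeff_ne_zero.mpr hg0 (by
      rcases mul_eq_zero.mp hzero with h1 | h1
      · exact absurd h1 hlam
      · exact h1)
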